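/- arXiv:1912.12519 — 8 statements merged into one kernel-verified Lean document; each statement's English description precedes it below -/
import Mathlib

section
/- For every positive integer n there exists δ > 0 such that for every n-dimensional real Banach space X there is a point x in the unit sphere of X with the property that for every h in the unit sphere of X, max{‖x + h‖, ‖x − h‖} ≥ 1 + δ. In fact one may take δ = (1 + 1/n)^{1/2} − 1. -/
open Matrix Filter Set


private lemma nlasq_det_max_trace {n : ℕ} {A P : Matrix (Fin n) (Fin n) ℝ}
    (hdet : 0 < A.det)
    (hle : ∀ t : ℝ, t ∈ Set.Ioc (0:ℝ) 1 → (A + t • (P - A)).det ≤ A.det) :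
    (A⁻¹ * P).trace ≤ n := by
  have hU : IsUnit A.det := isUnit_iff_ne_zero.mpr hdet.ne'
  set M := A⁻¹ * (P - A) with hM
  have hfac : ∀ t : ℝ, A + t • (P - A) = A * (1 + t • M) := by
    intro t
    rw [hM, mul_add, mul_one, mul_smul_comm, ← mul_assoc, Matrix.mul_nonsing_inv _ hU, one_mul]
  have key : ∀ t ∈ Set.Ioc (0:ℝ) 1, (1 + t • M).det ≤ 1 := by
    intro t ht
    have h1 := hle t ht
    rw [hfac, Matrix.det_mul] at h1
    nlinarith [h1]
  set e : ℝ → ℝ := fun t =>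
    ((1 + (Polynomial.X : Polynomial ℝ) • M.map Polynomial.C).det).divX.divX.eval t with he
  have hexp : ∀ t : ℝ, (1 + t • M).det = 1 + M.trace * t + e t * t ^ 2 := by
    intro t; exact Matrix.det_one_add_smul t M
  have hineq : ∀ t ∈ Set.Ioc (0:ℝ) 1, M.trace ≤ -(e t) * t := by
    intro t ht
    have h2 := key t ht
    rw [hexp t] at h2
    have ht0 : 0 < t := ht.1
    have h3 : M.trace * t ≤ (-(e t) * t) * t := by nlinarith
    exact le_of_mul_le_mul_right h3 ht0
  have hcont : Continuous fun t : ℝ => -(e t) * t := by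
    have : Continuous e := by
      simpa [he] using
        ((1 + (Polynomial.X : Polynomial ℝ) • M.map Polynomial.C).det).divX.divX.continuous
    exact this.neg.mul continuous_id
  have hlim : Tendsto (fun t : ℝ => -(e t) * t) (nhdsWithin 0 (Set.Ioi 0)) (nhds 0) := by
    have h0 : -(e 0) * (0:ℝ) = 0 := by ring
    simpa [h0] using (hcont.tendsto 0).mono_left nhdsWithin_le_nhds
  have hev : ∀ᶠ t in nhdsWithin (0:ℝ) (Set.Ioi 0), M.trace ≤ -(e t) * t := by
    filter_upwards [Ioc_mem_nhdsGT_of_mem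
      (show (0:ℝ) ∈ Set.Ico (0:ℝ) 1 by constructor <;> norm_num)] with t ht
    exact hineq t ht
  have htr : M.trace ≤ 0 := ge_of_tendsto hlim hev
  have heq : M.trace = (A⁻¹ * P).trace - n := by
    rw [hM, mul_sub, Matrix.trace_sub, Matrix.nonsing_inv_mul _ hU, Matrix.trace_one]
    simp
  rw [heq] at htr
  linarith

set_option maxHeartbeats 1000000 in
private lemma nlasq_exists_form (n : ℕ) (hn : 1 ≤ n) (V : Type) [NormedAddCommGroup V]
    [NormedSpace ℝ V] [FiniteDimensional ℝ V] (hfr : Module.finrank ℝ V = n) :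
    ∃ q : V → ℝ, Continuous q ∧ (∀ (s : ℝ) (x : V), q (s • x) = s ^ 2 * q x) ∧
      (∀ x y : V, q (x + y) + q (x - y) = 2 * q x + 2 * q y) ∧
      (∀ x : V, q x ≤ ‖x‖ ^ 2) ∧ (∀ x : V, ‖x‖ ^ 2 ≤ n * q x) := by
  classical
  have hn0 : (0:ℝ) < n := by exact_mod_cast hn
  let b : Module.Basis (Fin n) ℝ V := Module.finBasisOfFinrankEq ℝ V hfr
  let c : V ≃ₗ[ℝ] (Fin n → ℝ) := b.equivFun
  let Q : Matrix (Fin n) (Fin n) ℝ → V → ℝ := fun A x => c x ⬝ᵥ A *ᵥ c x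
  have hc_cont : Continuous fun x : V => c x :=
    LinearMap.continuous_of_finiteDimensional (c : V →ₗ[ℝ] (Fin n → ℝ))
  have hpoly : ∀ A : Matrix (Fin n) (Fin n) ℝ, Continuous fun v : Fin n → ℝ => v ⬝ᵥ A *ᵥ v := by
    intro A
    simp only [dotProduct, Matrix.mulVec]
    exact continuous_finset_sum _ fun i _ => (continuous_apply i).mul
      (continuous_finset_sum _ fun j _ => continuous_const.mul (continuous_apply j))
  have hQx_cont : ∀ A, Continuous (Q A) := fun A => (hpoly A).comp hc_cont
  have hQA_cont : ∀ x : V, Continuous fun A : Matrix (Fin n) (Fin n) ℝ => Q A x := by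
    intro x
    simp only [Q, dotProduct, Matrix.mulVec]
    exact continuous_finset_sum _ fun i _ => continuous_const.mul
      (continuous_finset_sum _ fun j _ =>
        ((continuous_apply_apply i j).mul continuous_const))
  have hQaddsmul : ∀ (A B : Matrix (Fin n) (Fin n) ℝ) (t : ℝ) (x : V),
      Q (A + t • B) x = Q A x + t * Q B x := by
    intro A B t x
    simp [Q, Matrix.add_mulVec, dotProduct_add, Matrix.smul_mulVec, dotProduct_smul]
  have hQsub : ∀ (A B : Matrix (Fin n) (Fin n) ℝ) (x : V), Q (A - B) x = Q A x - Q B x := by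
    intro A B x; simp [Q, Matrix.sub_mulVec, dotProduct_sub]
  have hQsmulx : ∀ (A : Matrix (Fin n) (Fin n) ℝ) (s : ℝ) (x : V),
      Q A (s • x) = s ^ 2 * Q A x := by
    intro A s x
    have hcs : c (s • x) = s • c x := _root_.map_smul c s x
    simp only [Q, hcs, Matrix.mulVec_smul, smul_dotProduct, dotProduct_smul, smul_eq_mul]
    ring
  have hQpar : ∀ (A : Matrix (Fin n) (Fin n) ℝ) (x y : V),
      Q A (x + y) + Q A (x - y) = 2 * Q A x + 2 * Q A y := by
    intro A x y
    simp only [Q, map_add, map_sub, Matrix.mulVec_add, Matrix.mulVec_sub, dotProduct_add,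
      dotProduct_sub, add_dotProduct, sub_dotProduct]
    ring
  -- the constraint set
  let S : Set (Matrix (Fin n) (Fin n) ℝ) :=
    {A | Aᵀ = A ∧ (∀ x : V, 0 ≤ Q A x) ∧ ∀ x : V, Q A x ≤ ‖x‖ ^ 2}
  have hSclosed : IsClosed S := by
    have h1 : IsClosed {A : Matrix (Fin n) (Fin n) ℝ | Aᵀ = A} :=
      isClosed_eq (continuous_id.matrix_transpose) continuous_id
    have h2 : IsClosed {A : Matrix (Fin n) (Fin n) ℝ | ∀ x : V, 0 ≤ Q A x} := by
      have he : {A : Matrix (Fin n) (Fin n) ℝ | ∀ x : V, 0 ≤ Q A x} =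
          ⋂ x : V, {A | 0 ≤ Q A x} := by ext A; simp
      rw [he]
      exact isClosed_iInter fun x => isClosed_le continuous_const (hQA_cont x)
    have h3 : IsClosed {A : Matrix (Fin n) (Fin n) ℝ | ∀ x : V, Q A x ≤ ‖x‖ ^ 2} := by
      have he : {A : Matrix (Fin n) (Fin n) ℝ | ∀ x : V, Q A x ≤ ‖x‖ ^ 2} =
          ⋂ x : V, {A | Q A x ≤ ‖x‖ ^ 2} := by ext A; simp
      rw [he]
      exact isClosed_iInter fun x => isClosed_le (hQA_cont x) continuous_const
    have he : S = {A : Matrix (Fin n) (Fin n) ℝ | Aᵀ = A} ∩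
        ({A | ∀ x : V, 0 ≤ Q A x} ∩ {A | ∀ x : V, Q A x ≤ ‖x‖ ^ 2}) := by
      ext A; simp only [S, Set.mem_setOf_eq, Set.mem_inter_iff]
    rw [he]; exact h1.inter (h2.inter h3)
  -- evaluation on basis vectors
  have hsingle : ∀ (A : Matrix (Fin n) (Fin n) ℝ) (i j : Fin n),
      c (b i) ⬝ᵥ A *ᵥ c (b j) = A i j := by
    intro A i j
    have h1 : c (b i) = Pi.single i 1 := by
      ext k; simp [c, Module.Basis.equivFun_self, Pi.single_apply, eq_comm]
    have h2 : c (b j) = Pi.single j 1 := by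
      ext k; simp [c, Module.Basis.equivFun_self, Pi.single_apply, eq_comm]
    rw [h1, h2]
    simp [dotProduct, Matrix.mulVec, Pi.single_apply]
  have hQbb : ∀ (A : Matrix (Fin n) (Fin n) ℝ) (k : Fin n), Q A (b k) = A k k := by
    intro A k; exact hsingle A k k
  have hQbasis : ∀ (A : Matrix (Fin n) (Fin n) ℝ) (i j : Fin n),
      Q A (b i + b j) = A i i + A i j + A j i + A j j := by
    intro A i j
    simp only [Q, map_add, Matrix.mulVec_add, dotProduct_add, add_dotProduct]
    rw [hsingle A i i, hsingle A i j, hsingle A j i, hsingle A j j]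
    ring
  have hQbasis' : ∀ (A : Matrix (Fin n) (Fin n) ℝ) (i j : Fin n),
      Q A (b i - b j) = A i i - A i j - A j i + A j j := by
    intro A i j
    simp only [Q, map_sub, Matrix.mulVec_sub, dotProduct_sub, sub_dotProduct]
    rw [hsingle A i i, hsingle A i j, hsingle A j i, hsingle A j j]
    ring
  -- bound on entries
  set Cb : ℝ := ∑ i : Fin n, ‖b i‖ ^ 2 with hCb
  have hCb_mem : ∀ i : Fin n, ‖b i‖ ^ 2 ≤ Cb := fun i =>
    Finset.single_le_sum (f := fun i => ‖b i‖ ^ 2) (fun j _ => by positivity) (Finset.mem_univ i)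
  have hbound : ∀ A ∈ S, ∀ i (j : Fin n), A i j ∈ Set.Icc (-Cb) Cb := by
    intro A hA i j
    obtain ⟨hAt, hA0, hA1⟩ := hA
    have hsym : A j i = A i j := by
      have := congrFun (congrFun hAt i) j
      simpa [Matrix.transpose_apply] using this
    have hdi0 : 0 ≤ A i i := (hQbb A i) ▸ hA0 (b i)
    have hdi1 : A i i ≤ ‖b i‖ ^ 2 := (hQbb A i) ▸ hA1 (b i)
    have hdj0 : 0 ≤ A j j := (hQbb A j) ▸ hA0 (b j)
    have hdj1 : A j j ≤ ‖b j‖ ^ 2 := (hQbb A j) ▸ hA1 (b j)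
    have hplus : 0 ≤ A i i + A i j + A j i + A j j := (hQbasis A i j) ▸ hA0 (b i + b j)
    have hminus : 0 ≤ A i i - A i j - A j i + A j j := (hQbasis' A i j) ▸ hA0 (b i - b j)
    have hci := hCb_mem i
    have hcj := hCb_mem j
    constructor
    · rw [hsym] at hplus; nlinarith
    · rw [hsym] at hminus; nlinarith
  -- compactness of S
  have hScpt : IsCompact S := by
    have h1 : IsCompact ((Set.univ.pi fun _ : Fin n => Set.univ.pi fun _ : Fin n =>
        Set.Icc (-Cb) Cb) : Set (Matrix (Fin n) (Fin n) ℝ)) :=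
      isCompact_univ_pi fun _ => isCompact_univ_pi fun _ => isCompact_Icc
    refine h1.of_isClosed_subset hSclosed ?_
    intro A hA
    intro i _
    intro j _
    exact hbound A hA i j
  -- the starting matrix ε • 1
  let L : V →L[ℝ] (Fin n → ℝ) := LinearMap.toContinuousLinearMap (c : V →ₗ[ℝ] (Fin n → ℝ))
  set KK : ℝ := ‖L‖ + 1 with hKK
  have hKK0 : 0 < KK := by positivity
  set ε : ℝ := 1 / (n * KK ^ 2) with hε
  have hε0 : 0 < ε := by positivity
  have hcoord : ∀ (x : V) (i : Fin n), |c x i| ≤ KK * ‖x‖ := by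
    intro x i
    have h1 : |c x i| ≤ ‖c x‖ := by
      have := norm_le_pi_norm (c x) i
      simpa using this
    have h2 : ‖(L x : Fin n → ℝ)‖ ≤ ‖L‖ * ‖x‖ := L.le_opNorm x
    have h3 : (L x : Fin n → ℝ) = c x := rfl
    rw [h3] at h2
    nlinarith [norm_nonneg x, norm_nonneg (c x)]
  have hA₀S : (ε • (1 : Matrix (Fin n) (Fin n) ℝ)) ∈ S := by
    have hQ0 : ∀ x : V, Q (ε • 1) x = ε * (c x ⬝ᵥ c x) := by
      intro x
      simp [Q, Matrix.smul_mulVec, Matrix.one_mulVec, dotProduct_smul]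
    refine ⟨by simp [Matrix.transpose_smul], ?_, ?_⟩
    · intro x
      rw [hQ0]
      have : 0 ≤ c x ⬝ᵥ c x := Finset.sum_nonneg fun i _ => mul_self_nonneg _
      positivity
    · intro x
      rw [hQ0]
      have hsum : c x ⬝ᵥ c x ≤ n * (KK * ‖x‖) ^ 2 := by
        have : ∀ i : Fin n, c x i * c x i ≤ (KK * ‖x‖) ^ 2 := by
          intro i
          have := hcoord x i
          nlinarith [abs_nonneg (c x i), le_abs_self (c x i), neg_abs_le (c x i)]
        calc c x ⬝ᵥ c x = ∑ i : Fin n, c x i * c x i := rfl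
          _ ≤ ∑ _i : Fin n, (KK * ‖x‖) ^ 2 := Finset.sum_le_sum fun i _ => this i
          _ = n * (KK * ‖x‖) ^ 2 := by simp [Finset.sum_const, Finset.card_univ, mul_comm]
      have : ε * (c x ⬝ᵥ c x) ≤ ε * (n * (KK * ‖x‖) ^ 2) :=
        mul_le_mul_of_nonneg_left hsum hε0.le
      refine this.trans ?_
      rw [hε]
      rw [div_mul_eq_mul_div, one_mul, div_le_iff₀ (by positivity)]
      nlinarith [norm_nonneg x, sq_nonneg ‖x‖]
  have hdetA₀ : 0 < (ε • (1 : Matrix (Fin n) (Fin n) ℝ)).det := by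
    rw [Matrix.det_smul, Matrix.det_one, Fintype.card_fin]
    positivity
  -- maximize det
  obtain ⟨A, hAS, hAmax⟩ := hScpt.exists_isMaxOn ⟨_, hA₀S⟩
    (continuous_id.matrix_det.continuousOn)
  have hdetA : 0 < A.det := lt_of_lt_of_le hdetA₀ (hAmax hA₀S)
  have hU : IsUnit A.det := isUnit_iff_ne_zero.mpr hdetA.ne'
  obtain ⟨hAt, hA0, hA1⟩ := hAS
  -- trace bound from maximality
  have htr : ∀ P ∈ S, (A⁻¹ * P).trace ≤ n := by
    intro P hP
    refine nlasq_det_max_trace hdetA ?_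
    intro t ht
    have hmem : A + t • (P - A) ∈ S := by
      obtain ⟨hPt, hP0, hP1⟩ := hP
      refine ⟨?_, ?_, ?_⟩
      · simp [Matrix.transpose_add, Matrix.transpose_smul, Matrix.transpose_sub, hAt, hPt]
      · intro x
        rw [hQaddsmul, hQsub]
        have h1 := hA0 x; have h2 := hP0 x
        nlinarith [ht.1.le, ht.2]
      · intro x
        rw [hQaddsmul, hQsub]
        have h1 := hA1 x; have h2 := hP1 x; have h3 := hA0 x; have h4 := hP0 x
        nlinarith [ht.1.le, ht.2]
    exact hAmax hmem
  -- symmetry of the bilinear form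
  have hsymB : ∀ v w : Fin n → ℝ, v ⬝ᵥ A *ᵥ w = w ⬝ᵥ A *ᵥ v := by
    intro v w
    rw [Matrix.dotProduct_mulVec, ← Matrix.mulVec_transpose, hAt, dotProduct_comm]
  -- positivity on all coordinate vectors
  have hposB : ∀ v : Fin n → ℝ, 0 ≤ v ⬝ᵥ A *ᵥ v := by
    intro v
    have := hA0 (c.symm v)
    simpa [Q, c.apply_symm_apply] using this
  -- the key lower bound
  have hlower : ∀ u : V, ‖u‖ ^ 2 ≤ n * Q A u := by
    intro u
    rcases eq_or_ne u 0 with rfl | hu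
    · simp [Q]
    · obtain ⟨f, hf1, hfu⟩ := exists_dual_vector ℝ u (norm_ne_zero_iff.mpr hu)
      set w : Fin n → ℝ := fun i => f (b i) with hw
      have hfw : ∀ x : V, f x = w ⬝ᵥ c x := by
        intro x
        conv_lhs => rw [← Module.Basis.sum_equivFun b x]
        rw [map_sum]
        simp only [_root_.map_smul, smul_eq_mul]
        simp [dotProduct, hw, mul_comm, c]
      set P : Matrix (Fin n) (Fin n) ℝ := Matrix.vecMulVec w w with hP
      have hPmul : ∀ v : Fin n → ℝ, P *ᵥ v = (w ⬝ᵥ v) • w := by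
        intro v
        ext i
        simp only [hP, Matrix.mulVec, Matrix.vecMulVec_apply, dotProduct, Pi.smul_apply,
          smul_eq_mul, Finset.sum_mul, Finset.mul_sum]
        exact Finset.sum_congr rfl fun j _ => by ring
      have hQP : ∀ x : V, Q P x = f x ^ 2 := by
        intro x
        simp only [Q, hPmul, dotProduct_smul, smul_eq_mul, hfw]
        rw [dotProduct_comm]
        ring
      have hPS : P ∈ S := by
        refine ⟨?_, ?_, ?_⟩
        · ext i j; simp [hP, Matrix.vecMulVec_apply, mul_comm]
        · intro x; rw [hQP]; positivity
        · intro x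
          rw [hQP]
          have h2 := f.le_opNorm x
          rw [hf1, one_mul] at h2
          have h3 : |f x| ≤ ‖x‖ := by rwa [← Real.norm_eq_abs]
          obtain ⟨hl, hr⟩ := abs_le.mp h3
          nlinarith
      have htrP := htr P hPS
      have htrace_eq : (A⁻¹ * P).trace = w ⬝ᵥ A⁻¹ *ᵥ w := by
        simp only [Matrix.trace, Matrix.diag, Matrix.mul_apply, hP, Matrix.vecMulVec_apply,
          dotProduct, Matrix.mulVec, Finset.mul_sum]
        exact Finset.sum_congr rfl fun i _ => Finset.sum_congr rfl fun j _ => by ring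
      set v : Fin n → ℝ := A⁻¹ *ᵥ w with hv
      have hAv : A *ᵥ v = w := by
        rw [hv, Matrix.mulVec_mulVec, Matrix.mul_nonsing_inv _ hU, Matrix.one_mulVec]
      set y : Fin n → ℝ := c u with hy
      have hquad : ∀ t : ℝ, 0 ≤ (v ⬝ᵥ A *ᵥ v) * (t * t) + (2 * (v ⬝ᵥ A *ᵥ y)) * t +
          (y ⬝ᵥ A *ᵥ y) := by
        intro t
        have h0 := hposB (y + t • v)
        have hyx : y ⬝ᵥ A *ᵥ v = v ⬝ᵥ A *ᵥ y := hsymB y v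
        simp only [Matrix.mulVec_add, Matrix.mulVec_smul, dotProduct_add, add_dotProduct,
          dotProduct_smul, smul_dotProduct, smul_eq_mul] at h0
        rw [hyx] at h0
        nlinarith [h0]
      have hdisc := discrim_le_zero hquad
      rw [discrim] at hdisc
      have ha_le : v ⬝ᵥ A *ᵥ v ≤ n := by
        have : v ⬝ᵥ A *ᵥ v = w ⬝ᵥ A⁻¹ *ᵥ w := by
          rw [hAv, dotProduct_comm]
        rw [this, ← htrace_eq]; exact htrP
      have hvy : v ⬝ᵥ A *ᵥ y = w ⬝ᵥ y := by
        rw [hsymB v y, hAv, dotProduct_comm]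
      have hfu' : f u = ‖u‖ := hfu
      have hwyu : w ⬝ᵥ y = ‖u‖ := by rw [hy, ← hfw, hfu']
      have hQAu : Q A u = y ⬝ᵥ A *ᵥ y := rfl
      have h1 : ‖u‖ ^ 2 ≤ (v ⬝ᵥ A *ᵥ v) * (y ⬝ᵥ A *ᵥ y) := by
        rw [← hwyu, ← hvy]
        nlinarith [hdisc]
      have h2 : (v ⬝ᵥ A *ᵥ v) * (y ⬝ᵥ A *ᵥ y) ≤ n * (y ⬝ᵥ A *ᵥ y) :=
        mul_le_mul_of_nonneg_right ha_le (hposB y)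
      rw [hQAu]
      linarith
  exact ⟨Q A, hQx_cont A, fun s x => hQsmulx A s x, fun x y => hQpar A x y, hA1, hlower⟩

/-- For every positive integer `n` there is `δ > 0` (one may take
`δ = √(1 + 1/n) - 1`) such that every `n`-dimensional real Banach space `X`
has a unit vector `x` with `max ‖x + h‖ ‖x - h‖ ≥ 1 + δ` for all unit `h`. -/
theorem finite_dim_uniformly_non_LASQ (n : ℕ) (hn : 1 ≤ n) :
    0 < Real.sqrt (1 + 1 / n) - 1 ∧
    ∀ (X : Type) (_ : NormedAddCommGroup X) (_ : NormedSpace ℝ X),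
      FiniteDimensional ℝ X → Module.finrank ℝ X = n →
      ∃ x : X, ‖x‖ = 1 ∧ ∀ h : X, ‖h‖ = 1 →
        1 + (Real.sqrt (1 + 1 / n) - 1) ≤ max ‖x + h‖ ‖x - h‖ := by
  have hn0 : (0:ℝ) < n := by exact_mod_cast hn
  have hnn : (0:ℝ) < 1 + 1 / n := by positivity
  constructor
  · rw [sub_pos]
    refine (Real.lt_sqrt (by norm_num)).mpr ?_
    have : 0 < 1 / (n:ℝ) := by positivity
    nlinarith
  · intro X _i1 _i2 hfd hfr
    obtain ⟨q, hqc, hqs, hqp, hqu, hql⟩ := nlasq_exists_form n hn X hfr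
    haveI : Nontrivial X := by
      apply Module.nontrivial_of_finrank_pos (R := ℝ) (M := X)
      omega
    have hne : (Metric.sphere (0:X) 1).Nonempty :=
      NormedSpace.sphere_nonempty.mpr zero_le_one
    obtain ⟨x, hxs, hxmax⟩ := (isCompact_sphere (0:X) 1).exists_isMaxOn hne hqc.continuousOn
    have hx1 : ‖x‖ = 1 := mem_sphere_zero_iff_norm.mp hxs
    refine ⟨x, hx1, ?_⟩
    intro h hh1
    have hq0 : q 0 = 0 := by
      have := hqs 0 0
      simpa using this
    have hqx_le1 : q x ≤ 1 := by have := hqu x; rw [hx1] at this; simpa using this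
    have hqx_ge : 1 ≤ n * q x := by have := hql x; rw [hx1] at this; simpa using this
    have hqh_ge : 1 ≤ n * q h := by have := hql h; rw [hh1] at this; simpa using this
    have hqx_pos : 0 < q x := by nlinarith
    have hqh : 1 / (n:ℝ) ≤ q h := by rw [div_le_iff₀ hn0]; linarith [mul_comm (n:ℝ) (q h)]
    have hqmax : ∀ y : X, q y ≤ q x * ‖y‖ ^ 2 := by
      intro y
      rcases eq_or_ne y 0 with rfl | hy
      · simp [hq0]
      · have hy0 : 0 < ‖y‖ := norm_pos_iff.mpr hy
        have hu1 : ‖(‖y‖⁻¹ • y)‖ = 1 := by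
          rw [norm_smul, norm_inv, norm_norm, inv_mul_cancel₀ hy0.ne']
        have hmem : (‖y‖⁻¹ • y) ∈ Metric.sphere (0:X) 1 := mem_sphere_zero_iff_norm.mpr hu1
        have hle : q (‖y‖⁻¹ • y) ≤ q x := hxmax hmem
        rw [hqs] at hle
        have h2 : q y = ‖y‖ ^ 2 * ((‖y‖⁻¹) ^ 2 * q y) := by
          field_simp
        rw [h2]
        calc ‖y‖ ^ 2 * ((‖y‖⁻¹) ^ 2 * q y) ≤ ‖y‖ ^ 2 * q x :=
              mul_le_mul_of_nonneg_left hle (by positivity)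
          _ = q x * ‖y‖ ^ 2 := by ring
    have par := hqp x h
    have hkey : q x + 1 / n ≤ max (q (x + h)) (q (x - h)) := by
      rcases le_total (q (x + h)) (q (x - h)) with hc | hc
      · rw [max_eq_right hc]; linarith
      · rw [max_eq_left hc]; linarith
    have hmain : ∀ z : X, q x + 1 / n ≤ q z → Real.sqrt (1 + 1 / n) ≤ ‖z‖ := by
      intro z hz
      have hqz : q x + 1 / n ≤ q x * ‖z‖ ^ 2 := le_trans hz (hqmax z)
      have h1n : (0:ℝ) < 1 / n := by positivity
      have h1 : (1:ℝ) + 1 / n ≤ ‖z‖ ^ 2 := by nlinarith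
      calc Real.sqrt (1 + 1 / n) ≤ Real.sqrt (‖z‖ ^ 2) := Real.sqrt_le_sqrt h1
        _ = ‖z‖ := by rw [Real.sqrt_sq (norm_nonneg z)]
    have hgoal : Real.sqrt (1 + 1 / n) ≤ max ‖x + h‖ ‖x - h‖ := by
      rcases le_total (q (x + h)) (q (x - h)) with hc | hc
      · rw [max_eq_right hc] at hkey
        exact le_trans (hmain _ hkey) (le_max_right _ _)
      · rw [max_eq_left hc] at hkey
        exact le_trans (hmain _ hkey) (le_max_left _ _)
    linarith
end

section
/- Let x be a point with ‖x‖_J = ‖x‖ = 1, where ‖·‖_J is a Euclidean (inner product) norm on ℝ^n satisfying ‖y‖_J ≤ ‖y‖ ≤ n^{1/2}‖y‖_J for all y. Then for every h with ‖h‖ = 1, max{‖x + h‖, ‖x − h‖} ≥ (1 + 1/n)^{1/2}. -/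
/-- If `Nrm` is a norm on `ℝⁿ` (with Euclidean norm `‖·‖_J = ‖·‖`) satisfying
`‖y‖ ≤ Nrm y ≤ √n ‖y‖` for all `y`, and `x` satisfies `‖x‖ = Nrm x = 1`,
then for every `h` with `Nrm h = 1` we have
`max (Nrm (x+h)) (Nrm (x-h)) ≥ √(1 + 1/n)`. -/
theorem john_point_estimate (n : ℕ) (hn : 1 ≤ n)
    (Nrm : EuclideanSpace ℝ (Fin n) → ℝ)
    (h₁ : ∀ y, ‖y‖ ≤ Nrm y)
    (h₂ : ∀ y, Nrm y ≤ Real.sqrt n * ‖y‖)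
    (x : EuclideanSpace ℝ (Fin n)) (hxJ : ‖x‖ = 1) (hx : Nrm x = 1) :
    ∀ h : EuclideanSpace ℝ (Fin n), Nrm h = 1 →
      Real.sqrt (1 + 1 / n) ≤ max (Nrm (x + h)) (Nrm (x - h)) := by
  intro h hh
  have hnpos : (0:ℝ) < n := by positivity
  set M := max (Nrm (x + h)) (Nrm (x - h)) with hM
  have hMnn : 0 ≤ M := le_trans (norm_nonneg _) (le_trans (h₁ _) (le_max_left _ _))
  -- lower bound on ‖h‖²
  have hsq : (1:ℝ)/n ≤ ‖h‖^2 := by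
    have h1 : (1:ℝ) ≤ Real.sqrt n * ‖h‖ := hh ▸ h₂ h
    have : (1:ℝ) ≤ (Real.sqrt n * ‖h‖)^2 := by nlinarith [Real.sqrt_nonneg (n:ℝ), norm_nonneg h]
    rw [mul_pow, Real.sq_sqrt hnpos.le] at this
    rw [div_le_iff₀ hnpos] at *
    linarith
  have par := parallelogram_law_with_norm ℝ x h
  have hmax : ‖x‖^2 + ‖h‖^2 ≤ M^2 := by
    have e1 : ‖x + h‖ ≤ M := le_trans (h₁ _) (le_max_left _ _)
    have e2 : ‖x - h‖ ≤ M := le_trans (h₁ _) (le_max_right _ _)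
    nlinarith [norm_nonneg (x + h), norm_nonneg (x - h)]
  have key : 1 + 1/(n:ℝ) ≤ M^2 := by rw [hxJ] at hmax; nlinarith
  calc Real.sqrt (1 + 1/(n:ℝ)) ≤ Real.sqrt (M^2) := Real.sqrt_le_sqrt key
    _ = M := by rw [Real.sqrt_sq hMnn]
end

section
/- Let k, n, m be positive integers with k² ≤ n and m = 2n, and let ‖·‖_{k,n} be the norm on ℝ^m defined by ‖f‖_{k,n} = sup over x in C_{k,n} of |f(x)|. Then for every f with ‖f‖_{k,n} = 1 there exists h with ‖h‖_{k,n} = 1 such that ‖f + h‖_{k,n} ≤ 1 + 1/k and ‖f − h‖_{k,n} ≤ 1 + 1/k. -/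
open Finset

/-- The value set `{|f(x)| : x ∈ C_{k,n}} = {|f(x)| : x ∈ B_k ∪ A_n}` for
`f ∈ ℝᵐ`, where `A_n` consists of the averaging functionals
`(1/n)∑_{j∈A} e_j*` over `n`-element sets `A`, and `B_k = {(1/k) e_j*}`. -/
def valueSet (k n m : ℕ) (f : Fin m → ℝ) : Set ℝ :=
  {r | ∃ A : Finset (Fin m), A.card = n ∧ r = |∑ j ∈ A, f j| / n} ∪
  {r | ∃ j : Fin m, r = |f j| / k}

/-- The norm `‖f‖_{k,n} = sup_{x ∈ C_{k,n}} |f(x)|` on `ℝᵐ`. -/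
noncomputable def nknNorm (k n m : ℕ) (f : Fin m → ℝ) : ℝ :=
  sSup (valueSet k n m f)

lemma valueSet_bddAbove (k n m : ℕ) (f : Fin m → ℝ) :
    BddAbove (valueSet k n m f) := by
  apply Set.Finite.bddAbove
  apply Set.Finite.union
  · exact (Set.finite_range (fun A : Finset (Fin m) => |∑ j ∈ A, f j| / n)).subset
      (by rintro r ⟨A, _, rfl⟩; exact ⟨A, rfl⟩)
  · exact (Set.finite_range (fun j : Fin m => |f j| / k)).subset
      (by rintro r ⟨j, rfl⟩; exact ⟨j, rfl⟩)

lemma valueSet_nonempty (k n m : ℕ) (hm : 0 < m) (f : Fin m → ℝ) :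
    (valueSet k n m f).Nonempty :=
  ⟨|f ⟨0, hm⟩| / k, Or.inr ⟨⟨0, hm⟩, rfl⟩⟩

/-- If `k² ≤ n` and `m = 2n`, then for every `f` of norm one in
`(ℝᵐ, ‖·‖_{k,n})` there is `h` of norm one with `‖f ± h‖_{k,n} ≤ 1 + 1/k`. -/
theorem finite_dim_almost_square_points (k n m : ℕ) (hk : 0 < k)
    (hkn : k ^ 2 ≤ n) (hm : m = 2 * n)
    (f : Fin m → ℝ) (hf : nknNorm k n m f = 1) :
    ∃ h : Fin m → ℝ, nknNorm k n m h = 1 ∧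
      nknNorm k n m (f + h) ≤ 1 + 1 / k ∧
      nknNorm k n m (f - h) ≤ 1 + 1 / k := by
  have hn : 0 < n := lt_of_lt_of_le (pow_pos hk 2) hkn
  have hm0 : 0 < m := by omega
  have hkR : (0:ℝ) < k := by exact_mod_cast hk
  have hnR : (0:ℝ) < n := by exact_mod_cast hn
  have hkk : k * k ≤ n := by nlinarith [hkn, sq k]
  have hkkR : (k:ℝ) * k ≤ n := by exact_mod_cast hkk
  have hk1R : (1:ℝ) ≤ k := by exact_mod_cast hk
  have hknR : (k:ℝ) ≤ n := by nlinarith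
  have hone : (1 + 1/(k:ℝ)) * k = k + 1 := by field_simp
  have hub : ∀ r ∈ valueSet k n m f, r ≤ 1 := by
    intro r hr
    rw [← hf]
    exact le_csSup (valueSet_bddAbove k n m f) hr
  have hB : ∀ j : Fin m, |f j| ≤ k := by
    intro j
    have := hub (|f j| / k) (Or.inr ⟨j, rfl⟩)
    calc |f j| = |f j| / k * k := by field_simp
    _ ≤ 1 * k := by nlinarith
    _ = k := one_mul _
  have hA : ∀ A : Finset (Fin m), A.card = n → |∑ j ∈ A, f j| ≤ n := by
    intro A hAc
    have := hub (|∑ j ∈ A, f j| / n) (Or.inl ⟨A, hAc, rfl⟩)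
    calc |∑ j ∈ A, f j| = |∑ j ∈ A, f j| / n * n := by field_simp
    _ ≤ 1 * n := by nlinarith
    _ = n := one_mul _
  -- find a coordinate with |f l| ≤ 1
  have hEx : ∃ l : Fin m, |f l| ≤ 1 := by
    by_contra hc
    push_neg at hc
    set P := Finset.univ.filter (fun j : Fin m => 1 < f j) with hPdef
    set N := Finset.univ.filter (fun j : Fin m => f j < -1) with hNdef
    have hPN : (Finset.univ : Finset (Fin m)) ⊆ P ∪ N := by
      intro j _
      rcases lt_abs.mp (hc j) with h | h
      · exact Finset.mem_union_left _ (Finset.mem_filter.mpr ⟨Finset.mem_univ j, h⟩)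
      · exact Finset.mem_union_right _
          (Finset.mem_filter.mpr ⟨Finset.mem_univ j, by linarith⟩)
    have hm' : m ≤ P.card + N.card := by
      calc m = (Finset.univ : Finset (Fin m)).card := by simp
      _ ≤ (P ∪ N).card := Finset.card_le_card hPN
      _ ≤ P.card + N.card := Finset.card_union_le _ _
    have hcases : n ≤ P.card ∨ n ≤ N.card := by omega
    rcases hcases with hcP | hcN
    · obtain ⟨A, hAsub, hAcard⟩ := Finset.exists_subset_card_eq hcP
      have hAne : A.Nonempty := Finset.card_pos.mp (by omega)
      have hlt : (n:ℝ) < ∑ j ∈ A, f j := by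
        calc (n:ℝ) = ∑ _j ∈ A, (1:ℝ) := by simp [hAcard]
        _ < ∑ j ∈ A, f j := by
            apply Finset.sum_lt_sum_of_nonempty hAne
            intro j hj
            have hmem := hAsub hj
            rw [hPdef, Finset.mem_filter] at hmem
            exact hmem.2
      have := hA A hAcard
      have := le_abs_self (∑ j ∈ A, f j)
      linarith
    · obtain ⟨A, hAsub, hAcard⟩ := Finset.exists_subset_card_eq hcN
      have hAne : A.Nonempty := Finset.card_pos.mp (by omega)
      have hlt : ∑ j ∈ A, f j < -(n:ℝ) := by
        calc ∑ j ∈ A, f j < ∑ _j ∈ A, (-1:ℝ) := by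
              apply Finset.sum_lt_sum_of_nonempty hAne
              intro j hj
              have hmem := hAsub hj
              rw [hNdef, Finset.mem_filter] at hmem
              exact hmem.2
        _ = -(n:ℝ) := by simp [hAcard]
      have := hA A hAcard
      have := neg_abs_le (∑ j ∈ A, f j)
      linarith
  obtain ⟨l, hl⟩ := hEx
  refine ⟨fun j => if j = l then (k:ℝ) else 0, ?_, ?_, ?_⟩
  · -- norm of h is 1
    apply le_antisymm
    · apply csSup_le (valueSet_nonempty k n m hm0 _)
      rintro r (⟨A, hAc, rfl⟩ | ⟨j, rfl⟩)
      · rw [Finset.sum_ite_eq' A l (fun _ => (k:ℝ))]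
        by_cases hlA : l ∈ A
        · rw [if_pos hlA, abs_of_pos hkR, div_le_one hnR]
          exact hknR
        · simp [hlA, hnR.le]
      · by_cases hjl : j = l
        · simp [hjl, abs_of_pos hkR, div_self hkR.ne']
        · simp [hjl, hkR.le]
    · apply le_csSup (valueSet_bddAbove k n m _)
      exact Or.inr ⟨l, by simp [abs_of_pos hkR, div_self hkR.ne']⟩
  · -- norm of f + h
    apply csSup_le (valueSet_nonempty k n m hm0 _)
    rintro r (⟨A, hAc, rfl⟩ | ⟨j, rfl⟩)
    · simp only [Pi.add_apply]
      rw [Finset.sum_add_distrib, Finset.sum_ite_eq' A l (fun _ => (k:ℝ))]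
      have h1 : |∑ j ∈ A, f j + (if l ∈ A then (k:ℝ) else 0)| ≤ n + k := by
        have h3 := abs_add_le (∑ j ∈ A, f j) (if l ∈ A then (k:ℝ) else 0)
        have h2 : |if l ∈ A then (k:ℝ) else 0| ≤ k := by
          by_cases hlA : l ∈ A <;> simp [hlA, abs_of_pos hkR, hkR.le]
        have := hA A hAc
        linarith
      rw [div_le_iff₀ hnR]
      have heq : (1 + 1/(k:ℝ)) * n = n + n/k := by ring
      rw [heq]
      have : (k:ℝ) ≤ n / k := by rw [le_div_iff₀ hkR]; linarith
      linarith
    · simp only [Pi.add_apply]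
      by_cases hjl : j = l
      · subst hjl
        rw [if_pos rfl, div_le_iff₀ hkR, hone]
        have h3 := abs_add_le (f j) (k:ℝ)
        rw [abs_of_pos hkR] at h3
        linarith
      · rw [if_neg hjl, add_zero, div_le_iff₀ hkR, hone]
        have := hB j
        linarith
  · -- norm of f - h
    apply csSup_le (valueSet_nonempty k n m hm0 _)
    rintro r (⟨A, hAc, rfl⟩ | ⟨j, rfl⟩)
    · simp only [Pi.sub_apply]
      rw [Finset.sum_sub_distrib, Finset.sum_ite_eq' A l (fun _ => (k:ℝ))]
      have h1 : |∑ j ∈ A, f j - (if l ∈ A then (k:ℝ) else 0)| ≤ n + k := by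
        have h3 := abs_sub (∑ j ∈ A, f j) (if l ∈ A then (k:ℝ) else 0)
        have h2 : |if l ∈ A then (k:ℝ) else 0| ≤ k := by
          by_cases hlA : l ∈ A <;> simp [hlA, abs_of_pos hkR, hkR.le]
        have := hA A hAc
        linarith
      rw [div_le_iff₀ hnR]
      have heq : (1 + 1/(k:ℝ)) * n = n + n/k := by ring
      rw [heq]
      have : (k:ℝ) ≤ n / k := by rw [le_div_iff₀ hkR]; linarith
      linarith
    · simp only [Pi.sub_apply]
      by_cases hjl : j = l
      · subst hjl
        rw [if_pos rfl, div_le_iff₀ hkR, hone]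
        have h3 := abs_sub (f j) (k:ℝ)
        rw [abs_of_pos hkR] at h3
        linarith
      · rw [if_neg hjl, sub_zero, div_le_iff₀ hkR, hone]
        have := hB j
        linarith
end

section
/- Fix an integer k ≥ 2 and a positive integer N. The norm ‖f‖_N = sup_{x ∈ D_N} |f(x)| on ℓ_∞ satisfies k^{-1}‖f‖_∞ ≤ ‖f‖_N ≤ k‖f‖_∞ for every f ∈ ℓ_∞. -/
open Finset Filter

/-- The block `E_n = {2^n, …, 2^{n+1} - 1}`. -/
def blockE (n : ℕ) : Finset ℕ := Finset.Ico (2 ^ n) (2 ^ (n + 1))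

/-- The value set `{|f(x)| : x ∈ D_N}` where `D_N = C ∪ B ∪ A_N`:
`A_N` are the averaging functionals `(1/N)∑_{j∈A} e_j*` over sets of size `kN`,
`B = {(1/k) e_j*}`, and `C = ⋃_{n≥1} C_n` with
`C_n = {(1/2)e_l* ± (1/2)e_m* : l ≠ m ∈ E_n}`. -/
def valueSetN (k N : ℕ) (f : ℕ → ℝ) : Set ℝ :=
  {r | ∃ A : Finset ℕ, A.card = k * N ∧ r = |∑ j ∈ A, f j| / N} ∪
  {r | ∃ j : ℕ, r = |f j| / k} ∪
  {r | ∃ n l m : ℕ, 1 ≤ n ∧ l ∈ blockE n ∧ m ∈ blockE n ∧ l ≠ m ∧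
        (r = |f l / 2 + f m / 2| ∨ r = |f l / 2 - f m / 2|)}

/-- The norm `‖f‖_N = sup_{x ∈ D_N} |f(x)|` on `ℓ_∞`. -/
noncomputable def normN (k N : ℕ) (f : ℕ → ℝ) : ℝ :=
  sSup (valueSetN k N f)

/-- For `k ≥ 2` and `N ≥ 1`, the norm `‖·‖_N` on `ℓ_∞` satisfies
`k⁻¹ ‖f‖_∞ ≤ ‖f‖_N ≤ k ‖f‖_∞` for every bounded `f`. -/
theorem normN_equivalent (k N : ℕ) (hk : 2 ≤ k) (hN : 1 ≤ N)
    (f : ℕ → ℝ) (hf : ∃ M : ℝ, ∀ j, |f j| ≤ M) :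
    (k : ℝ)⁻¹ * (⨆ j, |f j|) ≤ normN k N f ∧
    normN k N f ≤ (k : ℝ) * ⨆ j, |f j| := by
  obtain ⟨M, hM⟩ := hf
  set S := ⨆ j, |f j| with hSdef
  have hbdd : BddAbove (Set.range fun j => |f j|) := ⟨M, by rintro _ ⟨j, rfl⟩; exact hM j⟩
  have hS : ∀ j, |f j| ≤ S := fun j => le_ciSup hbdd j
  have hS0 : 0 ≤ S := le_trans (abs_nonneg _) (hS 0)
  have hk1 : (1 : ℝ) ≤ k := by exact_mod_cast le_trans (by norm_num) hk
  have hkpos : (0 : ℝ) < k := lt_of_lt_of_le one_pos hk1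
  have hNpos : (0 : ℝ) < N := by exact_mod_cast hN
  have hbound : ∀ r ∈ valueSetN k N f, r ≤ k * S := by
    rintro r ((⟨A, hA, rfl⟩ | ⟨j, rfl⟩) | ⟨n, l, m, hn, hl, hm, hlm, (rfl | rfl)⟩)
    · have h1 : |∑ j ∈ A, f j| ≤ (k * N : ℕ) * S := by
        calc |∑ j ∈ A, f j| ≤ ∑ j ∈ A, |f j| := Finset.abs_sum_le_sum_abs _ _
          _ ≤ ∑ j ∈ A, S := Finset.sum_le_sum fun j _ => hS j
          _ = A.card * S := by rw [Finset.sum_const, nsmul_eq_mul]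
          _ = (k * N : ℕ) * S := by rw [hA]
      rw [div_le_iff₀ hNpos]
      push_cast at h1 ⊢
      nlinarith
    · calc |f j| / k ≤ |f j| := div_le_self (abs_nonneg _) hk1
        _ ≤ S := hS j
        _ ≤ k * S := le_mul_of_one_le_left hS0 hk1
    · have h1 : |f l / 2 + f m / 2| ≤ |f l / 2| + |f m / 2| := abs_add_le _ _
      have h2 : |f l / 2| = |f l| / 2 := by rw [abs_div]; norm_num
      have h3 : |f m / 2| = |f m| / 2 := by rw [abs_div]; norm_num
      have := hS l; have := hS m
      nlinarith
    · have h1 : |f l / 2 - f m / 2| ≤ |f l / 2| + |f m / 2| := abs_sub _ _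
      have h2 : |f l / 2| = |f l| / 2 := by rw [abs_div]; norm_num
      have h3 : |f m / 2| = |f m| / 2 := by rw [abs_div]; norm_num
      have := hS l; have := hS m
      nlinarith
  have hbddV : BddAbove (valueSetN k N f) := ⟨k * S, fun r hr => hbound r hr⟩
  have hmem : ∀ j, |f j| / k ∈ valueSetN k N f := fun j => Or.inl (Or.inr ⟨j, rfl⟩)
  constructor
  · have hle : ∀ j, |f j| ≤ k * sSup (valueSetN k N f) := fun j => by
      have h := le_csSup hbddV (hmem j)
      rw [div_le_iff₀ hkpos] at h
      linarith [h]
    have hSle : S ≤ k * sSup (valueSetN k N f) := ciSup_le hle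
    rw [normN, inv_mul_le_iff₀ hkpos]
    exact hSle
  · exact Real.sSup_le hbound (by positivity)
end

section
/- Let N ∈ ℕ and f¹,…,f^K ∈ ℓ_∞ with ‖f^i‖_N = 1 for each i. Then there exists h ∈ c_0 with ‖h‖_N = 1 such that ‖f^i + h‖_N ≤ 1 + 1/N and ‖f^i − h‖_N ≤ 1 + 1/N for every i = 1,…,K. -/
open Finset Filter

set_option maxHeartbeats 1000000

lemma blockE_card (n : ℕ) : (blockE n).card = 2 ^ n := by
  have h : 2 ^ n ≤ 2 ^ (n+1) := Nat.pow_le_pow_right (by norm_num) (Nat.le_succ n)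
  rw [blockE, Nat.card_Ico, pow_succ]
  omega

lemma blockE_inj {n n' l : ℕ} (h : l ∈ blockE n) (h' : l ∈ blockE n') : n' = n := by
  rw [blockE, Finset.mem_Ico] at h h'
  by_contra hne
  rcases Nat.lt_or_ge n n' with hlt | hge
  · have : 2 ^ (n+1) ≤ 2 ^ n' := Nat.pow_le_pow_right (by norm_num) hlt
    omega
  · have : 2 ^ (n'+1) ≤ 2 ^ n := Nat.pow_le_pow_right (by norm_num) (by omega)
    omega

lemma sum_pm (l m : ℕ) (hlm : l ≠ m) (A : Finset ℕ) :
    |∑ j ∈ A, (if j = l then (1:ℝ) else if j = m then -1 else 0)| ≤ 1 := by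
  have hfun : ∀ j ∈ A, (if j = l then (1:ℝ) else if j = m then -1 else 0)
      = (if j = l then (1:ℝ) else 0) + (if j = m then (-1:ℝ) else 0) := by
    intro j _
    by_cases h1 : j = l
    · subst h1; simp [hlm]
    · by_cases h2 : j = m <;> simp [h1, h2, Ne.symm hlm]
  rw [Finset.sum_congr rfl hfun, Finset.sum_add_distrib,
    Finset.sum_ite_eq' A l, Finset.sum_ite_eq' A m]
  by_cases h1 : l ∈ A <;> by_cases h2 : m ∈ A <;> simp [h1, h2]

lemma key_bound (k N : ℕ) (hk : 2 ≤ k) (hN : 1 ≤ N) (f : ℕ → ℝ)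
    (hle : ∀ r ∈ valueSetN k N f, r ≤ 1)
    (n l m : ℕ) (hn : 1 ≤ n) (hl : l ∈ blockE n) (hm : m ∈ blockE n) (hlm : l ≠ m)
    (hsmall : ∀ j ∈ blockE n, |f j| ≤ 1/2 + 1/N)
    (hclose : |f l - f m| ≤ 1/N) :
    ∀ r ∈ valueSetN k N (f + fun j => if j = l then (1:ℝ) else if j = m then -1 else 0),
      r ≤ 1 + 1/N := by
  have hN1 : (1:ℝ) ≤ N := by exact_mod_cast hN
  have hNpos : (0:ℝ) < N := by linarith
  have hNinv : (0:ℝ) < 1/N := by positivity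
  have hk2 : (2:ℝ) ≤ k := by exact_mod_cast hk
  have hkpos : (0:ℝ) < k := by linarith
  set h : ℕ → ℝ := fun j => if j = l then (1:ℝ) else if j = m then -1 else 0 with hdef
  have hhl : h l = 1 := by simp [hdef]
  have hhm : h m = -1 := by simp [hdef, Ne.symm hlm]
  have hh0 : ∀ j, j ≠ l → j ≠ m → h j = 0 := by intro j h1 h2; simp [hdef, h1, h2]
  have habs : ∀ j, |h j| ≤ 1 := by
    intro j
    by_cases h1 : j = l
    · subst h1; rw [hhl]; norm_num
    · by_cases h2 : j = m
      · subst h2; rw [hhm]; norm_num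
      · rw [hh0 j h1 h2]; norm_num
  have hsl := abs_le.mp (hsmall l hl)
  have hsm := abs_le.mp (hsmall m hm)
  have hcl := abs_le.mp hclose
  rintro r ((⟨A, hA, rfl⟩ | ⟨j, rfl⟩) | ⟨n', l', m', hn', hl', hm', hne', hcase⟩)
  · -- averaging functionals
    have hAf : |∑ j ∈ A, f j| ≤ N := by
      have hmem : (|∑ j ∈ A, f j| / (N:ℝ)) ∈ valueSetN k N f := by
        simp only [valueSetN, Set.mem_union, Set.mem_setOf_eq]
        exact Or.inl (Or.inl ⟨A, hA, rfl⟩)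
      have := hle _ hmem
      rw [div_le_one hNpos] at this; exact this
    have hAh : |∑ j ∈ A, h j| ≤ 1 := sum_pm l m hlm A
    have hsum : ∑ j ∈ A, (f + h) j = (∑ j ∈ A, f j) + ∑ j ∈ A, h j := by
      simp [Finset.sum_add_distrib]
    rw [hsum, div_le_iff₀ hNpos]
    have ha := abs_le.mp hAf
    have hb := abs_le.mp hAh
    have hNN : (1 + 1/(N:ℝ)) * N = N + 1 := by field_simp
    rw [abs_le]
    constructor <;> linarith [ha.1, ha.2, hb.1, hb.2]
  · -- coordinate functionals
    by_cases h1 : j = l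
    · have e1 : (f + h) j = f j + 1 := by rw [Pi.add_apply, h1, hhl]
      have hsj : |f j| ≤ 1/2 + 1/N := h1 ▸ hsmall l hl
      have hsj' := abs_le.mp hsj
      rw [e1, div_le_iff₀ hkpos, abs_le]
      have hkk : (0:ℝ) ≤ (1 + 1/N) * ((k:ℝ) - 2) :=
        mul_nonneg (by positivity) (by linarith)
      constructor <;> nlinarith [hsj'.1, hsj'.2]
    · by_cases h2 : j = m
      · have e1 : (f + h) j = f j - 1 := by rw [Pi.add_apply, h2, hhm]; ring
        have hsj : |f j| ≤ 1/2 + 1/N := h2 ▸ hsmall m hm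
        have hsj' := abs_le.mp hsj
        rw [e1, div_le_iff₀ hkpos, abs_le]
        have hkk : (0:ℝ) ≤ (1 + 1/N) * ((k:ℝ) - 2) :=
          mul_nonneg (by positivity) (by linarith)
        constructor <;> nlinarith [hsj'.1, hsj'.2]
      · have e1 : (f + h) j = f j := by rw [Pi.add_apply, hh0 j h1 h2, add_zero]
        rw [e1]
        have hmem : (|f j| / (k:ℝ)) ∈ valueSetN k N f := by
          simp only [valueSetN, Set.mem_union, Set.mem_setOf_eq]
          exact Or.inl (Or.inr ⟨j, rfl⟩)
        have := hle _ hmem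
        linarith
  · -- pair functionals
    by_cases hout : l' ≠ l ∧ l' ≠ m ∧ m' ≠ l ∧ m' ≠ m
    · have e1 : (f + h) l' = f l' := by rw [Pi.add_apply, hh0 l' hout.1 hout.2.1, add_zero]
      have e2 : (f + h) m' = f m' := by
        rw [Pi.add_apply, hh0 m' hout.2.2.1 hout.2.2.2, add_zero]
      rcases hcase with rfl | rfl
      · rw [e1, e2]
        have hmem : |f l' / 2 + f m' / 2| ∈ valueSetN k N f := by
          simp only [valueSetN, Set.mem_union, Set.mem_setOf_eq]
          exact Or.inr ⟨n', l', m', hn', hl', hm', hne', Or.inl rfl⟩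
        have := hle _ hmem
        linarith
      · rw [e1, e2]
        have hmem : |f l' / 2 - f m' / 2| ∈ valueSetN k N f := by
          simp only [valueSetN, Set.mem_union, Set.mem_setOf_eq]
          exact Or.inr ⟨n', l', m', hn', hl', hm', hne', Or.inr rfl⟩
        have := hle _ hmem
        linarith
    · push_neg at hout
      have hn'n : n' = n := by
        rcases Decidable.em (l' = l) with c1 | c1
        · exact blockE_inj hl (c1 ▸ hl')
        rcases Decidable.em (l' = m) with c2 | c2
        · exact blockE_inj hm (c2 ▸ hl')
        rcases Decidable.em (m' = l) with c3 | c3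
        · exact blockE_inj hl (c3 ▸ hm')
        rcases Decidable.em (m' = m) with c4 | c4
        · exact blockE_inj hm (c4 ▸ hm')
        · exact absurd (hout c1 c2 c3) c4
      subst hn'n
      have hsl' := abs_le.mp (hsmall l' hl')
      have hsm' := abs_le.mp (hsmall m' hm')
      by_cases hmatch : (l' = l ∧ m' = m) ∨ (l' = m ∧ m' = l)
      · have hcl' : |f l' - f m'| ≤ 1/N := by
          rcases hmatch with ⟨c1, c2⟩ | ⟨c1, c2⟩
          · rw [c1, c2]; exact hclose
          · rw [c1, c2, abs_sub_comm]; exact hclose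
        have hcl2 := abs_le.mp hcl'
        rcases hmatch with ⟨c1, c2⟩ | ⟨c1, c2⟩
        · have e1 : (f + h) l' = f l' + 1 := by rw [Pi.add_apply, c1, hhl]
          have e2 : (f + h) m' = f m' - 1 := by rw [Pi.add_apply, c2, hhm]; ring
          rcases hcase with rfl | rfl <;> rw [e1, e2, abs_le] <;>
            constructor <;> linarith [hcl2.1, hcl2.2]
        · have e1 : (f + h) l' = f l' - 1 := by rw [Pi.add_apply, c1, hhm]; ring
          have e2 : (f + h) m' = f m' + 1 := by rw [Pi.add_apply, c2, hhl]
          rcases hcase with rfl | rfl <;> rw [e1, e2, abs_le] <;>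
            constructor <;> linarith [hcl2.1, hcl2.2]
      · have hzero : h l' = 0 ∨ h m' = 0 := by
          have hsplit : (l' ≠ l ∧ l' ≠ m) ∨ (m' ≠ l ∧ m' ≠ m) := by
            push_neg at hmatch
            omega
          rcases hsplit with ⟨a, b⟩ | ⟨a, b⟩
          · exact Or.inl (hh0 l' a b)
          · exact Or.inr (hh0 m' a b)
        have hal' := abs_le.mp (habs l')
        have ham' := abs_le.mp (habs m')
        have hhsum : |h l'| + |h m'| ≤ 1 := by
          rcases hzero with hz | hz <;> rw [hz] <;> simp <;> [exact habs m'; exact habs l']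
        have hal2 := abs_nonneg (h l')
        have ham2 := abs_nonneg (h m')
        have hgl : |f l' + h l'| ≤ 1/2 + 1/N + |h l'| := by
          have := abs_add_le (f l') (h l')
          linarith [hsmall l' hl']
        have hgm : |f m' + h m'| ≤ 1/2 + 1/N + |h m'| := by
          have := abs_add_le (f m') (h m')
          linarith [hsmall m' hm']
        have hgl2 := abs_le.mp hgl
        have hgm2 := abs_le.mp hgm
        rcases hcase with rfl | rfl <;> rw [Pi.add_apply, Pi.add_apply, abs_le] <;>
          constructor <;>
          linarith [hgl2.1, hgl2.2, hgm2.1, hgm2.2]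

lemma bddAbove_valueSetN (k N : ℕ) (hk : 1 ≤ k) (hN : 1 ≤ N) (g : ℕ → ℝ) (M : ℝ)
    (hM : ∀ j, |g j| ≤ M) : BddAbove (valueSetN k N g) := by
  have hM0 : 0 ≤ M := le_trans (abs_nonneg _) (hM 0)
  have hk1 : (1:ℝ) ≤ k := by exact_mod_cast hk
  have hN1 : (1:ℝ) ≤ N := by exact_mod_cast hN
  have hKNM : (0:ℝ) ≤ (k*N:ℕ) * M := by positivity
  refine ⟨(k*N:ℕ) * M + M, ?_⟩
  rintro r ((⟨A, hA, rfl⟩ | ⟨j, rfl⟩) | ⟨n', l', m', hn', hl', hm', hne', (rfl|rfl)⟩)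
  · have h1 : |∑ j ∈ A, g j| ≤ (k*N:ℕ) * M := by
      calc |∑ j ∈ A, g j| ≤ ∑ j ∈ A, |g j| := Finset.abs_sum_le_sum_abs _ _
        _ ≤ A.card • M := Finset.sum_le_card_nsmul _ _ _ (fun j _ => hM j)
        _ = (k*N:ℕ) * M := by rw [hA, nsmul_eq_mul]
    calc |∑ j ∈ A, g j| / N ≤ |∑ j ∈ A, g j| := div_le_self (abs_nonneg _) hN1
      _ ≤ (k*N:ℕ) * M := h1
      _ ≤ (k*N:ℕ) * M + M := by linarith
  · calc |g j| / k ≤ |g j| := div_le_self (abs_nonneg _) hk1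
      _ ≤ M := hM j
      _ ≤ (k*N:ℕ) * M + M := by linarith
  · have h1 := abs_le.mp (hM l'); have h2 := abs_le.mp (hM m')
    rw [abs_le]; constructor <;> linarith [h1.1, h1.2, h2.1, h2.2]
  · have h1 := abs_le.mp (hM l'); have h2 := abs_le.mp (hM m')
    rw [abs_le]; constructor <;> linarith [h1.1, h1.2, h2.1, h2.2]

/-- `(ℓ_∞, ‖·‖_N)` is almost square up to `1/N`: for norm-one
`f¹, …, f^K` there is `h ∈ c_0` with `‖h‖_N = 1` and
`‖f^i ± h‖_N ≤ 1 + 1/N` for all `i`. -/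
theorem normN_almost_square (k N : ℕ) (hk : 2 ≤ k) (hN : 1 ≤ N)
    (K : ℕ) (f : Fin K → ℕ → ℝ)
    (hb : ∀ i, ∃ M : ℝ, ∀ j, |f i j| ≤ M)
    (hf : ∀ i, normN k N (f i) = 1) :
    ∃ h : ℕ → ℝ, Tendsto h atTop (nhds 0) ∧ normN k N h = 1 ∧
      ∀ i, normN k N (f i + h) ≤ 1 + 1 / N ∧ normN k N (f i - h) ≤ 1 + 1 / N := by
  have hN1 : (1:ℝ) ≤ N := by exact_mod_cast hN
  have hNpos : (0:ℝ) < N := by linarith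
  have hNinv : (0:ℝ) < 1/N := by positivity
  have hk1 : 1 ≤ k := by omega
  have hk2 : (2:ℝ) ≤ k := by exact_mod_cast hk
  have hkpos : (0:ℝ) < k := by linarith
  -- every value of `f i` is at most `1`
  have hle : ∀ i, ∀ r ∈ valueSetN k N (f i), r ≤ 1 := by
    intro i r hr
    obtain ⟨M, hM⟩ := hb i
    have hbdd := bddAbove_valueSetN k N hk1 hN (f i) M hM
    calc r ≤ sSup (valueSetN k N (f i)) := le_csSup hbdd hr
      _ = 1 := hf i
  -- the averaging bound
  have hA : ∀ i, ∀ A : Finset ℕ, A.card = k * N → |∑ j ∈ A, f i j| ≤ N := by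
    intro i A hcard
    have hmem : (|∑ j ∈ A, f i j| / (N:ℝ)) ∈ valueSetN k N (f i) := by
      simp only [valueSetN, Set.mem_union, Set.mem_setOf_eq]
      exact Or.inl (Or.inl ⟨A, hcard, rfl⟩)
    have := hle i _ hmem
    rwa [div_le_one hNpos] at this
  -- the set of coordinates where some `f i` is large is finite
  have hbadfin : ∀ i, {j : ℕ | 1/2 + 1/(N:ℝ) ≤ |f i j|}.Finite := by
    intro i
    have hpos : {j : ℕ | 1/2 + 1/(N:ℝ) ≤ f i j}.Finite := by
      by_contra hinf
      have hinf' : Set.Infinite _ := fun hfin => hinf hfin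
      obtain ⟨A, hAsub, hAcard⟩ := hinf'.exists_subset_card_eq (k*N)
      have h1 : A.card • (1/2 + 1/(N:ℝ)) ≤ ∑ j ∈ A, f i j :=
        Finset.card_nsmul_le_sum A (f i) _ (fun j hj => hAsub (Finset.mem_coe.mpr hj))
      have h2 : ∑ j ∈ A, f i j ≤ |∑ j ∈ A, f i j| := le_abs_self _
      have h3 := hA i A hAcard
      rw [hAcard, nsmul_eq_mul] at h1
      have hcast : ((k*N : ℕ) : ℝ) = (k:ℝ) * N := by push_cast; ring
      rw [hcast] at h1
      have hid : (k:ℝ)*N*(1/2 + 1/N) = (k:ℝ)*N/2 + k := by field_simp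
      have hkN : 2*(N:ℝ) ≤ (k:ℝ)*N := mul_le_mul_of_nonneg_right hk2 hNpos.le
      linarith
    have hneg : {j : ℕ | f i j ≤ -(1/2 + 1/(N:ℝ))}.Finite := by
      by_contra hinf
      have hinf' : Set.Infinite _ := fun hfin => hinf hfin
      obtain ⟨A, hAsub, hAcard⟩ := hinf'.exists_subset_card_eq (k*N)
      have h1 : ∑ j ∈ A, f i j ≤ A.card • (-(1/2 + 1/(N:ℝ))) :=
        Finset.sum_le_card_nsmul A (f i) _ (fun j hj => hAsub (Finset.mem_coe.mpr hj))
      have h2 : -(∑ j ∈ A, f i j) ≤ |∑ j ∈ A, f i j| := neg_le_abs _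
      have h3 := hA i A hAcard
      rw [hAcard, nsmul_eq_mul] at h1
      have hcast : ((k*N : ℕ) : ℝ) = (k:ℝ) * N := by push_cast; ring
      rw [hcast] at h1
      have hid : (k:ℝ)*N*(-(1/2 + 1/N)) = -((k:ℝ)*N/2 + k) := by field_simp
      have hkN : 2*(N:ℝ) ≤ (k:ℝ)*N := mul_le_mul_of_nonneg_right hk2 hNpos.le
      linarith
    apply Set.Finite.subset (hpos.union hneg)
    intro j hj
    have hj' : 1/2 + 1/(N:ℝ) ≤ |f i j| := hj
    rcases le_abs.mp hj' with h | h
    · exact Or.inl h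
    · exact Or.inr (by simpa using (by linarith : f i j ≤ -(1/2 + 1/(N:ℝ))))
  have hbig : (⋃ i, {j : ℕ | 1/2 + 1/(N:ℝ) ≤ |f i j|}).Finite :=
    Set.finite_iUnion hbadfin
  obtain ⟨J, hJ⟩ := hbig.bddAbove
  have hgood : ∀ j, J < j → ∀ i, |f i j| ≤ 1/2 + 1/(N:ℝ) := by
    intro j hj i
    by_contra hcon
    push_neg at hcon
    have hmem : j ∈ ⋃ i, {j : ℕ | 1/2 + 1/(N:ℝ) ≤ |f i j|} :=
      Set.mem_iUnion.mpr ⟨i, le_of_lt hcon⟩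
    exact absurd (hJ hmem) (by omega)
  -- choose a block where all `f i` are small, and two coordinates close on all `f i`
  set n : ℕ := max J ((4*N+1)^K) + 1 with hndef
  have hn1 : 1 ≤ n := by omega
  have h2n : J < 2^n ∧ (4*N+1)^K < 2^n := by
    have := Nat.lt_two_pow_self (n := n)
    constructor <;> omega
  have hsmall : ∀ j ∈ blockE n, ∀ i, |f i j| ≤ 1/2 + 1/(N:ℝ) := by
    intro j hj i
    rw [blockE, Finset.mem_Ico] at hj
    exact hgood j (by omega) i
  have hmaps : ∀ j ∈ blockE n, (fun i => ⌊(N:ℝ) * f i j⌋) ∈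
      Fintype.piFinset (fun _ : Fin K => Finset.Icc (-(2*(N:ℤ))) (2*N)) := by
    intro j hj
    rw [Fintype.mem_piFinset]
    intro i
    rw [Finset.mem_Icc]
    have hfj := abs_le.mp (hsmall j hj i)
    have e1 : (N:ℝ) * (-(1/2 + 1/N)) = -((N:ℝ)/2) - 1 := by field_simp; ring
    have e2 : (N:ℝ) * (1/2 + 1/N) = (N:ℝ)/2 + 1 := by field_simp
    have m1 := mul_le_mul_of_nonneg_left hfj.1 hNpos.le
    have m2 := mul_le_mul_of_nonneg_left hfj.2 hNpos.le
    constructor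
    · rw [Int.le_floor]
      push_cast
      linarith
    · have h3 : ⌊(N:ℝ) * f i j⌋ ≤ ⌊((2*N : ℤ) : ℝ)⌋ :=
        Int.floor_le_floor (by push_cast; linarith)
      rwa [Int.floor_intCast] at h3
  have hcardlt : (Fintype.piFinset (fun _ : Fin K => Finset.Icc (-(2*(N:ℤ))) (2*N))).card
      < (blockE n).card := by
    rw [blockE_card, Fintype.card_piFinset]
    have hIcc : (Finset.Icc (-(2*(N:ℤ))) (2*N)).card = 4*N+1 := by
      rw [Int.card_Icc]
      omega
    rw [Finset.prod_const, hIcc, Finset.card_univ, Fintype.card_fin]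
    exact h2n.2
  obtain ⟨l, hlmem, m, hmmem, hlm, heqp⟩ :=
    Finset.exists_ne_map_eq_of_card_lt_of_maps_to hcardlt hmaps
  have hclose : ∀ i, |f i l - f i m| ≤ 1/(N:ℝ) := by
    intro i
    have he : ⌊(N:ℝ) * f i l⌋ = ⌊(N:ℝ) * f i m⌋ := congrFun heqp i
    have h1 := Int.floor_le ((N:ℝ) * f i l)
    have h2 := Int.lt_floor_add_one ((N:ℝ) * f i l)
    have h3 := Int.floor_le ((N:ℝ) * f i m)
    have h4 := Int.lt_floor_add_one ((N:ℝ) * f i m)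
    rw [he] at h1 h2
    have hd : |(N:ℝ) * f i l - (N:ℝ) * f i m| ≤ 1 := by
      rw [abs_le]; constructor <;> linarith
    have hrw : |f i l - f i m| = |(N:ℝ) * f i l - (N:ℝ) * f i m| / N := by
      rw [← mul_sub, abs_mul, abs_of_pos hNpos]
      field_simp
    rw [hrw]
    gcongr
  -- the witness
  set h : ℕ → ℝ := fun j => if j = l then (1:ℝ) else if j = m then -1 else 0 with hdef
  have hhl : h l = 1 := by simp [hdef]
  have hhm : h m = -1 := by simp [hdef, Ne.symm hlm]
  have hh0 : ∀ j, j ≠ l → j ≠ m → h j = 0 := by intro j h1 h2; simp [hdef, h1, h2]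
  have habs : ∀ j, |h j| ≤ 1 := by
    intro j
    by_cases h1 : j = l
    · rw [h1, hhl]; norm_num
    · by_cases h2 : j = m
      · rw [h2, hhm]; norm_num
      · rw [hh0 j h1 h2]; norm_num
  refine ⟨h, ?_, ?_, ?_⟩
  · -- `h` tends to `0`
    have hev : h =ᶠ[atTop] (fun _ => (0:ℝ)) := by
      filter_upwards [eventually_gt_atTop (max l m)] with j hj
      exact hh0 j (by omega) (by omega)
    exact Tendsto.congr' hev.symm tendsto_const_nhds
  · -- `‖h‖_N = 1`
    have hb1 : ∀ r ∈ valueSetN k N h, r ≤ 1 := by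
      rintro r ((⟨A, hA2, rfl⟩ | ⟨j, rfl⟩) | ⟨n', l', m', hn', hl', hm', hne', hcase⟩)
      · have hs := sum_pm l m hlm A
        have h1N : 1/(N:ℝ) ≤ 1 := by rw [div_le_one hNpos]; exact hN1
        calc |∑ j ∈ A, h j| / (N:ℝ) ≤ 1 / N := by gcongr
          _ ≤ 1 := h1N
      · have h1k : 1/(k:ℝ) ≤ 1 := by rw [div_le_one hkpos]; linarith
        calc |h j| / (k:ℝ) ≤ 1 / k := by gcongr; exact habs j
          _ ≤ 1 := h1k
      · have a1 := abs_le.mp (habs l')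
        have a2 := abs_le.mp (habs m')
        rcases hcase with rfl | rfl <;> rw [abs_le] <;> constructor <;> linarith
    apply le_antisymm
    · refine csSup_le ⟨|h 0| / k, ?_⟩ hb1
      simp only [valueSetN, Set.mem_union, Set.mem_setOf_eq]
      exact Or.inl (Or.inr ⟨0, rfl⟩)
    · apply le_csSup ⟨1, hb1⟩
      show (1:ℝ) ∈ valueSetN k N h
      simp only [valueSetN, Set.mem_union, Set.mem_setOf_eq]
      refine Or.inr ⟨n, l, m, hn1, hlmem, hmmem, hlm, Or.inr ?_⟩
      rw [hhl, hhm]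
      norm_num
  · -- the two almost-square estimates
    intro i
    constructor
    · have hkey := key_bound k N hk hN (f i) (hle i) n l m hn1 hlmem hmmem hlm
        (fun j hj => hsmall j hj i) (hclose i)
      refine csSup_le ⟨|(f i + h) 0| / k, ?_⟩ hkey
      simp only [valueSetN, Set.mem_union, Set.mem_setOf_eq]
      exact Or.inl (Or.inr ⟨0, rfl⟩)
    · have heq2 : f i - h = f i + (fun j => if j = m then (1:ℝ) else if j = l then -1 else 0) := by
        funext j
        simp only [Pi.sub_apply, Pi.add_apply, hdef]
        by_cases h1 : j = l
        · subst h1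
          rw [if_pos rfl, if_neg hlm, if_pos rfl]
          ring
        · by_cases h2 : j = m
          · subst h2
            rw [if_neg h1, if_pos rfl, if_pos rfl]
            ring
          · rw [if_neg h1, if_neg h2, if_neg h2, if_neg h1]
            ring
      rw [heq2]
      have hkey := key_bound k N hk hN (f i) (hle i) n m l hn1 hmmem hlmem (Ne.symm hlm)
        (fun j hj => hsmall j hj i) (by rw [abs_sub_comm]; exact hclose i)
      refine csSup_le ⟨|(f i + fun j => if j = m then (1:ℝ) else if j = l then -1 else 0) 0| / k, ?_⟩ hkey
      simp only [valueSetN, Set.mem_union, Set.mem_setOf_eq]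
      exact Or.inl (Or.inr ⟨0, rfl⟩)
end

section
/- Let Z and W be Banach spaces, with Z almost square. Then the ℓ_∞-direct sum W ⊕_∞ Z is almost square. -/
/-- A normed space is almost square (ASQ) if for every `ε > 0` and finitely
many unit vectors `x₁, …, xₙ` there is a unit vector `h` with
`‖xᵢ ± h‖ ≤ 1 + ε` for all `i`. -/
def IsASQ (X : Type*) [NormedAddCommGroup X] : Prop :=
  ∀ ε : ℝ, 0 < ε → ∀ (n : ℕ) (x : Fin n → X), (∀ i, ‖x i‖ = 1) →
    ∃ h : X, ‖h‖ = 1 ∧ ∀ i, ‖x i + h‖ ≤ 1 + ε ∧ ‖x i - h‖ ≤ 1 + ε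

private lemma key_est {Z : Type*} [NormedAddCommGroup Z] [NormedSpace ℝ Z]
    {z h : Z} {ε : ℝ} (hε : 0 < ε) (hz1 : ‖z‖ ≤ 1) (hh : ‖h‖ = 1)
    (hzn : z ≠ 0) (hy : ‖‖z‖⁻¹ • z + h‖ ≤ 1 + ε) : ‖z + h‖ ≤ 1 + ε := by
  have hr : (0:ℝ) < ‖z‖ := norm_pos_iff.mpr hzn
  have hdecomp : z + h = ‖z‖ • (‖z‖⁻¹ • z + h) + (1 - ‖z‖) • h := by
    rw [smul_add, smul_smul, mul_inv_cancel₀ hr.ne', one_smul, sub_smul, one_smul]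
    abel
  calc ‖z + h‖ ≤ ‖‖z‖ • (‖z‖⁻¹ • z + h)‖ + ‖(1 - ‖z‖) • h‖ := by
        rw [hdecomp]; exact norm_add_le _ _
    _ = ‖z‖ * ‖‖z‖⁻¹ • z + h‖ + (1 - ‖z‖) * 1 := by
        rw [norm_smul, norm_smul, Real.norm_of_nonneg hr.le,
          Real.norm_of_nonneg (by linarith), hh]
    _ ≤ ‖z‖ * (1 + ε) + (1 - ‖z‖) * 1 := by nlinarith
    _ = 1 + ‖z‖ * ε := by ring
    _ ≤ 1 + ε := by nlinarith

/-- If `Z` is almost square then so is the `ℓ_∞`-direct sum `W ⊕_∞ Z`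
(the product `W × Z` with the max norm). -/
theorem prod_sup_ASQ (W Z : Type*)
    [NormedAddCommGroup W] [NormedSpace ℝ W] [CompleteSpace W]
    [NormedAddCommGroup Z] [NormedSpace ℝ Z] [CompleteSpace Z]
    (hZ : IsASQ Z) : IsASQ (W × Z) := by
  classical
  intro ε hε n x hx
  -- a unit vector of Z
  obtain ⟨u, hu, -⟩ := hZ 1 one_pos 0 (fun i => i.elim0) (fun i => i.elim0)
  -- normalized second components
  set y : Fin n → Z := fun i =>
    if (x i).2 = 0 then u else ‖(x i).2‖⁻¹ • (x i).2 with hy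
  have hy1 : ∀ i, ‖y i‖ = 1 := by
    intro i
    by_cases hzi : (x i).2 = 0
    · simp [hy, hzi, hu]
    · have hr : (0:ℝ) < ‖(x i).2‖ := norm_pos_iff.mpr hzi
      simp [hy, hzi, norm_smul, Real.norm_of_nonneg (inv_nonneg.mpr hr.le),
        inv_mul_cancel₀ hr.ne']
  obtain ⟨h, hh, hineq⟩ := hZ ε hε n y hy1
  refine ⟨(0, h), ?_, ?_⟩
  · simp [Prod.norm_def, hh]
  intro i
  have hxi := hx i
  have hw : ‖(x i).1‖ ≤ 1 := by
    rw [Prod.norm_def] at hxi; exact le_max_left _ _ |>.trans hxi.le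
  have hz1 : ‖(x i).2‖ ≤ 1 := by
    rw [Prod.norm_def] at hxi; exact le_max_right _ _ |>.trans hxi.le
  have hzp : ‖(x i).2 + h‖ ≤ 1 + ε := by
    by_cases hzi : (x i).2 = 0
    · simp [hzi, hh]; linarith
    · exact key_est hε hz1 hh hzi (by simpa [hy, hzi] using (hineq i).1)
  have hzm : ‖(x i).2 - h‖ ≤ 1 + ε := by
    by_cases hzi : (x i).2 = 0
    · simp [hzi, hh]; linarith
    · have := (hineq i).2
      have : ‖‖(x i).2‖⁻¹ • (x i).2 + (-h)‖ ≤ 1 + ε := by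
        simpa [hy, hzi, sub_eq_add_neg] using this
      have := key_est hε hz1 (by simpa using hh) hzi this
      simpa [sub_eq_add_neg] using this
  constructor
  · calc ‖x i + (0, h)‖ = max ‖(x i).1‖ ‖(x i).2 + h‖ := by
          simp [Prod.norm_def]
      _ ≤ 1 + ε := max_le (by linarith) hzp
  · calc ‖x i - (0, h)‖ = max ‖(x i).1‖ ‖(x i).2 - h‖ := by
          simp [Prod.norm_def]
      _ ≤ 1 + ε := max_le (by linarith) hzm
end

section
/- A c_0-sum of any family of nonzero Banach spaces is almost square. -/
open Filter

/-- The `c_0`-sum of a family `(X i)`: the elements `f` of the `ℓ_∞`-sum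
`lp X ∞` with `‖f i‖ → 0` along the cofinite filter, with the sup norm. -/
noncomputable def c0Sum {I : Type*} (X : I → Type*) [∀ i, NormedAddCommGroup (X i)] :
    AddSubgroup (lp X (⊤ : ENNReal)) where
  carrier := {f | Tendsto (fun i => ‖(f : ∀ i, X i) i‖) cofinite (nhds 0)}
  add_mem' {f g} hf hg := by
    refine squeeze_zero (fun i => norm_nonneg _) (fun i => ?_) (by simpa using hf.add hg)
    simpa using norm_add_le ((f : ∀ i, X i) i) ((g : ∀ i, X i) i)
  zero_mem' := by simpa using (tendsto_const_nhds : Tendsto (fun _ : I => (0:ℝ)) cofinite (nhds 0))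
  neg_mem' {f} hf := by simpa using hf

/-- A `c_0`-sum of a family of nonzero Banach spaces is almost square. -/
theorem c0Sum_ASQ {I : Type*} [Infinite I] (X : I → Type*)
    [∀ i, NormedAddCommGroup (X i)] [∀ i, NormedSpace ℝ (X i)]
    [∀ i, CompleteSpace (X i)] [∀ i, Nontrivial (X i)] :
    IsASQ (c0Sum X) := by
  intro ε hε n x hx
  classical
  -- find a coordinate where all the x j are small
  have hsmall : ∀ᶠ i in (cofinite : Filter I), ∀ j : Fin n,
      ‖((x j : lp X (⊤ : ENNReal)) : ∀ i, X i) i‖ ≤ ε := by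
    rw [eventually_all]
    intro j
    have := (x j).2
    exact this.eventually (ge_mem_nhds hε)
  obtain ⟨i₀, hi₀⟩ := hsmall.exists
  -- a unit vector in X i₀
  obtain ⟨v, hv⟩ := exists_norm_eq (X i₀) (zero_le_one (α := ℝ))
  set g : lp X (⊤ : ENNReal) := lp.single ⊤ i₀ v with hg
  have hgapp : ∀ i, ‖(g : ∀ i, X i) i‖ ≤ 1 := by
    intro i
    by_cases hii : i = i₀
    · subst hii; rw [hg, lp.single_apply_self, hv]
    · rw [hg, lp.single_apply_ne _ _ _ hii]; simp
  have hgmem : g ∈ c0Sum X := by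
    have : ∀ᶠ i in (cofinite : Filter I),
        ‖(g : ∀ i, X i) i‖ = 0 := by
      filter_upwards [(Set.finite_singleton i₀).eventually_cofinite_notMem] with i hi
      rw [hg, lp.single_apply_ne _ _ _ (by simpa using hi)]
      simp
    exact Tendsto.congr' (by filter_upwards [this] with i hi using hi.symm)
      tendsto_const_nhds
  have hgnorm : ‖g‖ = 1 := by
    refine le_antisymm (lp.norm_le_of_forall_le zero_le_one hgapp) ?_
    have := lp.norm_apply_le_norm (E := X) ENNReal.top_ne_zero g i₀
    rw [hg, lp.single_apply_self, hv] at this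
    exact this
  refine ⟨⟨g, hgmem⟩, hgnorm, fun j => ?_⟩
  have key : ∀ (s : ℝ), s = 1 ∨ s = -1 →
      ‖(x j : lp X (⊤ : ENNReal)) + s • g‖ ≤ 1 + ε := by
    intro s hs
    refine lp.norm_le_of_forall_le (by linarith) fun i => ?_
    have hadd : ‖((x j : lp X (⊤ : ENNReal)) : ∀ i, X i) i + s • (g : ∀ i, X i) i‖
        ≤ ‖((x j : lp X (⊤ : ENNReal)) : ∀ i, X i) i‖ + ‖s • (g : ∀ i, X i) i‖ :=
      norm_add_le _ _
    have hcoe : (((x j : lp X (⊤ : ENNReal)) + s • g : lp X (⊤ : ENNReal)) : ∀ i, X i) i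
        = ((x j : lp X (⊤ : ENNReal)) : ∀ i, X i) i + s • (g : ∀ i, X i) i := by
      simp [lp.coeFn_add, lp.coeFn_smul]
      rfl
    rw [hcoe]
    have hsnorm : ‖s‖ = 1 := by rcases hs with h | h <;> simp [h]
    by_cases hii : i = i₀
    · subst hii
      have h1 : ‖((x j : lp X (⊤ : ENNReal)) : ∀ i, X i) i‖ ≤ ε := hi₀ j
      have h2 : ‖s • (g : ∀ i, X i) i‖ ≤ 1 := by
        rw [norm_smul, hsnorm, one_mul]; exact hgapp i
      linarith
    · have h1 : ‖((x j : lp X (⊤ : ENNReal)) : ∀ i, X i) i‖ ≤ 1 := by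
        have := lp.norm_apply_le_norm (E := X) ENNReal.top_ne_zero
          (x j : lp X (⊤ : ENNReal)) i
        calc _ ≤ ‖(x j : lp X (⊤ : ENNReal))‖ := this
          _ = 1 := hx j
      have h2 : ‖s • (g : ∀ i, X i) i‖ = 0 := by
        rw [hg, lp.single_apply_ne _ _ _ hii]; simp
      linarith
  constructor
  · have := key 1 (Or.inl rfl)
    simpa using this
  · have := key (-1) (Or.inr rfl)
    have heq : (x j : lp X (⊤ : ENNReal)) + (-1 : ℝ) • g
        = (x j : lp X (⊤ : ENNReal)) - g := by
      simp [sub_eq_add_neg]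
    rw [heq] at this
    simpa using this
end

section
/- Let X be a separable almost square Banach space. Then there exists a sequence (h_n) in the unit sphere of X such that for every x ∈ X, lim_n ‖x + h_n‖ = max{‖x‖, 1} and lim_n ‖x − h_n‖ = max{‖x‖, 1}. -/
open Filter

lemma asq_scale_key {X : Type} [NormedAddCommGroup X] [NormedSpace ℝ X] {x h : X}
    (hx : x ≠ 0) (hh : ‖h‖ = 1) {c : ℝ} (hc : 1 ≤ c)
    (hb : ‖(‖x‖⁻¹ • x) + h‖ ≤ c) : ‖x + h‖ ≤ max ‖x‖ 1 * c := by
  have ht : (0:ℝ) < ‖x‖ := norm_pos_iff.mpr hx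
  set t := ‖x‖ with htdef
  set u := t⁻¹ • x with hu_def
  have hu : ‖u‖ = 1 := by
    rw [hu_def, norm_smul, norm_inv, Real.norm_eq_abs, abs_of_pos ht, ← htdef]
    field_simp
  have hxu : x = t • u := by
    rw [hu_def, smul_smul]
    rw [mul_inv_cancel₀ ht.ne', one_smul]
  rcases le_total t 1 with h1 | h1
  · have hsplit : x + h = t • (u + h) + (1 - t) • h := by
      rw [hxu]; module
    have := norm_add_le (t • (u + h)) ((1 - t) • h)
    rw [← hsplit, norm_smul, norm_smul, hh, Real.norm_eq_abs, Real.norm_eq_abs,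
      abs_of_pos ht, abs_of_nonneg (by linarith : (0:ℝ) ≤ 1 - t)] at this
    have hmax : max t 1 = 1 := max_eq_right h1
    rw [hmax, one_mul]
    nlinarith [ht]
  · have hsplit : x + h = (t - 1) • u + (u + h) := by
      rw [hxu]; module
    have := norm_add_le ((t - 1) • u) (u + h)
    rw [← hsplit, norm_smul, hu, Real.norm_eq_abs,
      abs_of_nonneg (by linarith : (0:ℝ) ≤ t - 1)] at this
    have hmax : max t 1 = t := max_eq_left h1
    rw [hmax]
    nlinarith

/-- In a separable almost square Banach space there is a sequence `(h_n)` of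
unit vectors with `‖x ± h_n‖ → max {‖x‖, 1}` for every `x`. -/
theorem separable_ASQ_exists_sequence (X : Type)
    [NormedAddCommGroup X] [NormedSpace ℝ X] [CompleteSpace X]
    [TopologicalSpace.SeparableSpace X] (hX : IsASQ X) :
    ∃ h : ℕ → X, (∀ n, ‖h n‖ = 1) ∧
      ∀ x : X,
        Tendsto (fun n => ‖x + h n‖) atTop (nhds (max ‖x‖ 1)) ∧
        Tendsto (fun n => ‖x - h n‖) atTop (nhds (max ‖x‖ 1)) := by
  -- the sphere is nonempty
  obtain ⟨h0, hh0, -⟩ := hX 1 one_pos 0 (fun i => i.elim0) (fun i => i.elim0)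
  haveI : Nonempty (Metric.sphere (0:X) 1) :=
    ⟨⟨h0, by simpa [mem_sphere_zero_iff_norm] using hh0⟩⟩
  -- a dense sequence in the sphere
  set u : ℕ → Metric.sphere (0:X) 1 := TopologicalSpace.denseSeq _
  have hu : DenseRange u := TopologicalSpace.denseRange_denseSeq _
  have hun : ∀ k, ‖(u k : X)‖ = 1 := fun k => by
    have := (u k).2
    simpa [mem_sphere_zero_iff_norm] using this
  -- apply ASQ at each stage
  have H : ∀ n : ℕ, ∃ h : X, ‖h‖ = 1 ∧ ∀ i : Fin (n+1),
      ‖(u i : X) + h‖ ≤ 1 + 1/(n+1) ∧ ‖(u i : X) - h‖ ≤ 1 + 1/(n+1) := by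
    intro n
    exact hX (1/(n+1)) (by positivity) (n+1) (fun i => (u i : X)) (fun i => hun i)
  choose h hnorm hineq using H
  refine ⟨h, hnorm, fun x => ?_⟩
  -- key: both norms eventually within δ of M
  set M := max ‖x‖ 1 with hM
  have hM1 : (1:ℝ) ≤ M := le_max_right _ _
  have hMpos : (0:ℝ) < M := lt_of_lt_of_le one_pos hM1
  have key : ∀ δ : ℝ, 0 < δ → ∃ N, ∀ n ≥ N,
      ‖x + h n‖ ≤ M + δ ∧ ‖x - h n‖ ≤ M + δ := by
    intro δ hδ
    by_cases hx : x = 0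
    · refine ⟨0, fun n _ => ?_⟩
      simp [hx, hnorm n, hM]
      linarith
    · -- approximate x/‖x‖ by some u k
      set ε' := δ / (4 * M) with hε'
      have hε'pos : 0 < ε' := by positivity
      have hxn : (0:ℝ) < ‖x‖ := norm_pos_iff.mpr hx
      have hv : (‖x‖⁻¹ • x) ∈ Metric.sphere (0:X) 1 := by
        rw [mem_sphere_zero_iff_norm, norm_smul, norm_inv, Real.norm_eq_abs,
          abs_of_pos hxn]
        field_simp
      obtain ⟨k, hk⟩ := (Metric.denseRange_iff.mp hu) ⟨_, hv⟩ ε' hε'pos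
      obtain ⟨N0, hN0⟩ := exists_nat_gt (1/ε')
      refine ⟨max k N0, fun n hn => ?_⟩
      have hkn : k ≤ n := le_trans (le_max_left _ _) hn
      have hN0n : (N0:ℝ) ≤ n := by
        exact_mod_cast le_trans (le_max_right k N0) hn
      have hsmall : 1/((n:ℝ)+1) ≤ ε' := by
        rw [div_le_iff₀ (by positivity)]
        rw [div_lt_iff₀ hε'pos] at hN0
        nlinarith
      have hdist : ‖(‖x‖⁻¹ • x) - (u k : X)‖ < ε' := by
        have := hk
        rw [Subtype.dist_eq, dist_eq_norm] at this
        exact this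
      have hb : ∀ s : X, ‖(u k : X) + s‖ ≤ 1 + 1/(n+1) →
          ‖(‖x‖⁻¹ • x) + s‖ ≤ 1 + 2*ε' := by
        intro s hs
        have : (‖x‖⁻¹ • x) + s = ((‖x‖⁻¹ • x) - (u k : X)) + ((u k : X) + s) := by abel
        rw [this]
        calc ‖((‖x‖⁻¹ • x) - (u k : X)) + ((u k : X) + s)‖
            ≤ ‖(‖x‖⁻¹ • x) - (u k : X)‖ + ‖(u k : X) + s‖ := norm_add_le _ _
          _ ≤ ε' + (1 + 1/(n+1)) := by linarith
          _ ≤ 1 + 2*ε' := by linarith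
      have hc : (1:ℝ) ≤ 1 + 2*ε' := by linarith
      have hMc : M * (1 + 2*ε') ≤ M + δ := by
        have : M * (1 + 2*ε') = M + 2 * M * ε' := by ring
        rw [this, hε']
        have : 2 * M * (δ / (4*M)) = δ/2 := by field_simp; ring
        rw [this]; linarith
      constructor
      · have h1 := hb (h n) ((hineq n ⟨k, by omega⟩).1)
        have := asq_scale_key hx (hnorm n) hc h1
        rw [← hM] at this
        linarith
      · have h1 : ‖(u k : X) + (-(h n))‖ ≤ 1 + 1/(n+1) := by
          simpa [sub_eq_add_neg] using (hineq n ⟨k, by omega⟩).2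
        have h2 := hb (-(h n)) h1
        have h3 : ‖(-(h n))‖ = 1 := by simpa using hnorm n
        have := asq_scale_key hx h3 hc h2
        rw [← hM, ← sub_eq_add_neg] at this
        linarith
  -- lower bound from triangle inequality
  have lower : ∀ n, 2 * M ≤ ‖x + h n‖ + ‖x - h n‖ := by
    intro n
    have h1 : 2 * ‖x‖ ≤ ‖x + h n‖ + ‖x - h n‖ := by
      have := norm_add_le (x + h n) (x - h n)
      have e : (x + h n) + (x - h n) = (2:ℝ) • x := by module
      rw [e, norm_smul] at this
      simpa using this
    have h2 : 2 * 1 ≤ ‖x + h n‖ + ‖x - h n‖ := by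
      have := norm_sub_le (x + h n) (x - h n)
      have e : (x + h n) - (x - h n) = (2:ℝ) • (h n) := by module
      rw [e, norm_smul, hnorm n] at this
      simpa using this
    rcases max_cases ‖x‖ 1 with ⟨he, -⟩ | ⟨he, -⟩ <;> rw [hM, he] <;> linarith
  constructor <;>
  · rw [Metric.tendsto_atTop]
    intro ε hε
    obtain ⟨N, hN⟩ := key (ε/2) (by linarith)
    refine ⟨N, fun n hn => ?_⟩
    obtain ⟨ha, hb⟩ := hN n hn
    have hl := lower n
    rw [Real.dist_eq, abs_lt]
    constructor <;> linarith
end
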